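/- When r ≡ +∞ and ℓ is càdlàg real-valued, the explicit formula for the ESM reduces to the one-sided Skorokhod map: Γ_ℓ(ψ)(t) = ψ(t) + sup_{s∈[0,t]} (ℓ(s) − ψ(s))⁺, i.e., ψ − Ξ_{ℓ,∞}(ψ) = Γ_ℓ(ψ). -/
import Mathlib


open Set Filter

/-- A càdlàg real-valued function on `[0, ∞)`. -/
def Cadlag (f : ℝ → ℝ) : Prop :=
  ∀ t : ℝ, 0 ≤ t → ContinuousWithinAt f (Set.Ici t) t ∧
    (0 < t → ∃ l : ℝ, Filter.Tendsto f (nhdsWithin t (Set.Iio t)) (nhds l))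

/-- The functional `Ξ_{ℓ,r}(ψ)` computed in the extended reals, with upper boundary
`r ≡ +∞`, so that each term `ψ(s) - r(s)` is interpreted as `-∞`. -/
noncomputable def XiTop (l ψ : ℝ → ℝ) (t : ℝ) : EReal :=
  max (min (max ((ψ 0 : EReal) - ⊤) 0)
        (⨅ u ∈ Set.Icc (0 : ℝ) t, ((ψ u - l u : ℝ) : EReal)))
      (⨆ s ∈ Set.Icc (0 : ℝ) t,
        min ((ψ s : EReal) - ⊤) (⨅ u ∈ Set.Icc s t, ((ψ u - l u : ℝ) : EReal)))

/-- A càdlàg function is bounded on `[0, t]`. -/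
lemma cadlag_bdd (f : ℝ → ℝ) (hf : Cadlag f) (t : ℝ) :
    ∃ M : ℝ, ∀ u ∈ Set.Icc (0:ℝ) t, |f u| ≤ M := by
  have key : ∀ x : ℝ, ∃ U : Set ℝ, IsOpen U ∧ x ∈ U ∧
      ∃ M, ∀ u ∈ U ∩ Set.Icc (0:ℝ) t, |f u| ≤ M := by
    intro x
    by_cases hx : x ∈ Set.Icc (0:ℝ) t
    · have hx0 : (0:ℝ) ≤ x := hx.1
      have hr : Filter.Tendsto f (nhdsWithin x (Set.Ici x)) (nhds (f x)) := (hf x hx0).1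
      have hmem : {y : ℝ | |y| < |f x| + 1} ∈ nhds (f x) := by
        refine IsOpen.mem_nhds (isOpen_lt continuous_abs continuous_const) ?_
        simp only [Set.mem_setOf_eq]
        linarith
      have hre : ∀ᶠ u in nhdsWithin x (Set.Ici x), |f u| < |f x| + 1 := hr hmem
      rw [eventually_iff, mem_nhdsWithin] at hre
      obtain ⟨V, hVo, hxV, hV⟩ := hre
      rcases eq_or_lt_of_le hx0 with h0 | h0
      · refine ⟨V, hVo, hxV, |f x| + 1, ?_⟩
        intro u hu
        exact le_of_lt (hV ⟨hu.1, h0 ▸ hu.2.1⟩)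
      · obtain ⟨L, hL⟩ := (hf x hx0).2 h0
        have hmem' : {y : ℝ | |y| < |L| + 1} ∈ nhds L := by
          refine IsOpen.mem_nhds (isOpen_lt continuous_abs continuous_const) ?_
          simp only [Set.mem_setOf_eq]
          linarith
        have hle : ∀ᶠ u in nhdsWithin x (Set.Iio x), |f u| < |L| + 1 := hL hmem'
        rw [eventually_iff, mem_nhdsWithin] at hle
        obtain ⟨W, hWo, hxW, hW⟩ := hle
        refine ⟨V ∩ W, hVo.inter hWo, ⟨hxV, hxW⟩, max (|f x| + 1) (|L| + 1), ?_⟩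
        intro u hu
        rcases le_or_gt x u with h | h
        · exact le_max_of_le_left (le_of_lt (hV ⟨hu.1.1, h⟩))
        · exact le_max_of_le_right (le_of_lt (hW ⟨hu.1.2, h⟩))
    · refine ⟨(Set.Icc (0:ℝ) t)ᶜ, isClosed_Icc.isOpen_compl, hx, 0, ?_⟩
      intro u hu
      exact absurd hu.2 hu.1
  choose U hUo hxU M hM using key
  obtain ⟨s, -, hcover⟩ :=
    isCompact_Icc.elim_nhds_subcover U (fun x _ => (hUo x).mem_nhds (hxU x))
  by_cases hst : (0:ℝ) ≤ t
  · have h0 : (0:ℝ) ∈ Set.Icc (0:ℝ) t := ⟨le_refl _, hst⟩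
    obtain ⟨x0, hx0s, -⟩ := Set.mem_iUnion₂.mp (hcover h0)
    have hsne : s.Nonempty := ⟨x0, hx0s⟩
    refine ⟨s.sup' hsne M, ?_⟩
    intro u hu
    obtain ⟨x, hxs, hxU'⟩ := Set.mem_iUnion₂.mp (hcover hu)
    exact le_trans (hM x u ⟨hxU', hu⟩) (Finset.le_sup' M hxs)
  · exact ⟨0, fun u hu => absurd (hu.1.trans hu.2) hst⟩

lemma ereal_biInf_coe {h : ℝ → ℝ} {K : Set ℝ} (hne : K.Nonempty)
    (hbd : BddBelow (h '' K)) :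
    (⨅ u ∈ K, ((h u : ℝ) : EReal)) = ((sInf (h '' K) : ℝ) : EReal) := by
  have hmono : Monotone (fun x : ℝ => (x : EReal)) := fun a b hab => EReal.coe_le_coe_iff.mpr hab
  have hkey := hmono.map_csInf_of_continuousAt
    (continuous_coe_real_ereal.continuousAt) (hne.image h) hbd
  rw [hkey, ← Set.image_comp, sInf_image]
  rfl

/-- When `r ≡ +∞`, the explicit formula for the extended Skorokhod map reduces to the
one-sided Skorokhod map: `ψ(t) - Ξ_{ℓ,∞}(ψ)(t) = ψ(t) + sup_{s∈[0,t]} (ℓ(s) - ψ(s))⁺`. -/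
theorem esm_top_is_one_sided (l ψ : ℝ → ℝ) (hl : Cadlag l) (hψ : Cadlag ψ) :
    ∀ t : ℝ, 0 ≤ t →
      (ψ t : EReal) - XiTop l ψ t =
        ((ψ t + sSup ((fun s => max (l s - ψ s) 0) '' Set.Icc 0 t) : ℝ) : EReal) := by
  intro t ht
  obtain ⟨Mψ, hMψ⟩ := cadlag_bdd ψ hψ t
  obtain ⟨Ml, hMl⟩ := cadlag_bdd l hl t
  set K := Set.Icc (0:ℝ) t with hKdef
  have hKne : K.Nonempty := Set.nonempty_Icc.mpr ht
  -- Simplify XiTop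
  have h1 : XiTop l ψ t = min 0 (⨅ u ∈ K, ((ψ u - l u : ℝ) : EReal)) := by
    unfold XiTop
    simp [EReal.sub_top]
    simp [hKdef, Set.mem_Icc]
  -- bounds
  have hbdB : BddBelow ((fun u => ψ u - l u) '' K) := by
    refine ⟨-(Mψ + Ml), ?_⟩
    rintro x ⟨u, hu, rfl⟩
    have h1 := abs_le.mp (hMψ u hu)
    have h2 := abs_le.mp (hMl u hu)
    simp only
    linarith
  have hbdA : BddAbove ((fun s => max (l s - ψ s) 0) '' K) := by
    refine ⟨max (Ml + Mψ) 0, ?_⟩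
    rintro x ⟨u, hu, rfl⟩
    have h1 := abs_le.mp (hMψ u hu)
    have h2 := abs_le.mp (hMl u hu)
    exact max_le_max (by linarith) le_rfl
  set J := sInf ((fun u => ψ u - l u) '' K) with hJdef
  set S := sSup ((fun s => max (l s - ψ s) 0) '' K) with hSdef
  have hJle : ∀ u ∈ K, J ≤ ψ u - l u := fun u hu => csInf_le hbdB ⟨u, hu, rfl⟩
  have hSge : ∀ s ∈ K, max (l s - ψ s) 0 ≤ S := fun s hs => le_csSup hbdA ⟨s, hs, rfl⟩
  have hS0 : (0:ℝ) ≤ S := le_trans (le_max_right _ _) (hSge 0 ⟨le_refl _, ht⟩)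
  have hSJ : S = max (-J) 0 := by
    apply le_antisymm
    · apply csSup_le (hKne.image _)
      rintro x ⟨s, hs, rfl⟩
      exact max_le_max (by linarith [hJle s hs]) le_rfl
    · refine max_le ?_ hS0
      have hJS : -S ≤ J := by
        refine le_csInf (hKne.image _) ?_
        rintro x ⟨u, hu, rfl⟩
        have h1 := hSge u hu
        have h2 := le_max_left (l u - ψ u) 0
        simp only
        linarith
      linarith
  have hmin : min (0:ℝ) J = -S := by
    rw [hSJ]
    rcases le_total J 0 with h | h
    · rw [min_eq_right h, max_eq_left (by linarith)]
      ring
    · rw [min_eq_left h, max_eq_right (by linarith)]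
      ring
  rw [h1, ereal_biInf_coe hKne hbdB, ← hJdef]
  have hcoemin : (min 0 ((J : ℝ) : EReal)) = ((min 0 J : ℝ) : EReal) := by
    rw [← EReal.coe_zero]
    rcases le_total (0:ℝ) J with h | h
    · rw [min_eq_left h, min_eq_left (EReal.coe_le_coe_iff.mpr h)]
    · rw [min_eq_right h, min_eq_right (EReal.coe_le_coe_iff.mpr h)]
  rw [hcoemin, ← EReal.coe_sub]
  congr 1
  rw [hmin]
  ring
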